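/- Let G be a finite group of order n and f a binary cocycle on G. Suppose there exists g ∈ G with g ≠ 1 such that ∑_{h∈G} f(g, h) ≠ 0 (so that the cocyclic matrix M_f is not Hadamard). Then every subset S of G whose corresponding rows of M_f are pairwise orthogonal (i.e., ∑_{h∈G} f(a, h) * f(b, h) = 0 for all distinct a, b ∈ S) satisfies 2 * |S| ≤ n; that is, the depth of any partial Hadamard matrix formed by rows of M_f is at most n/2. -/

import Mathlib

/-- if a binary cocycle `f` on a finite group `G` of order `n` has some
row `g ≠ 1` of the cocyclic matrix `M_f` not summing to zero, then any set `S` of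
elements of `G` whose corresponding rows of `M_f` are pairwise orthogonal satisfies
`2|S| ≤ n`: the depth of any partial Hadamard matrix formed by rows of `M_f` is at
most half of its size. -/
theorem stmt_17 {G : Type*} [Group G] [Fintype G] (f : G → G → ℤ)
    (hpm : ∀ a b, f a b = 1 ∨ f a b = -1)
    (hcoc : ∀ a b c, f a b * f (a * b) c = f b c * f a (b * c))
    (g : G) (hg : g ≠ 1) (hsum : ∑ h, f g h ≠ 0)
    (S : Finset G) (hS : ∀ a ∈ S, ∀ b ∈ S, a ≠ b → ∑ h, f a h * f b h = 0) :
    2 * S.card ≤ Fintype.card G := by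
  classical
  have hsq : ∀ a b : G, f a b * f a b = 1 := by
    intro a b; rcases hpm a b with h | h <;> rw [h] <;> ring
  -- rows a and g*a are never orthogonal
  have key : ∀ a : G, ∑ h, f a h * f (g * a) h ≠ 0 := by
    intro a
    have hpt : ∀ h : G, f a h * f (g * a) h = f g a * f g (a * h) := by
      intro h
      have h1 := hcoc g a h
      rcases hpm a h with h2 | h2 <;> rcases hpm g a with h3 | h3 <;>
        rw [h2, h3] at h1 ⊢ <;> linarith
    rw [Finset.sum_congr rfl (fun h _ => hpt h), ← Finset.mul_sum]
    have hre : ∑ h : G, f g (a * h) = ∑ h : G, f g h :=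
      Fintype.sum_equiv (Equiv.mulLeft a) _ _ (fun h => rfl)
    rw [hre]
    intro hc
    rcases mul_eq_zero.mp hc with h | h
    · rcases hpm g a with h' | h' <;> omega
    · exact hsum h
  -- S and g•S are disjoint
  have hdisj : Disjoint S (S.image (fun a => g * a)) := by
    rw [Finset.disjoint_right]
    intro x hx hxS
    rcases Finset.mem_image.mp hx with ⟨a, haS, rfl⟩
    have hne : a ≠ g * a := by
      intro h; exact hg (by rwa [right_eq_mul] at h)
    exact key a (hS a haS (g * a) hxS hne)
  have hcardim : (S.image (fun a => g * a)).card = S.card :=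
    Finset.card_image_of_injective _ (mul_right_injective g)
  have := Finset.card_union_of_disjoint hdisj ▸ (S ∪ S.image (fun a => g * a)).card_le_univ
  calc 2 * S.card = S.card + (S.image (fun a => g * a)).card := by omega
    _ = (S ∪ S.image (fun a => g * a)).card := (Finset.card_union_of_disjoint hdisj).symm
    _ ≤ Fintype.card G := Finset.card_le_univ _
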